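/- Under conditions (G1) and (G2), for every ξ > 0 one has K1(ξ) + ξ·K1'(ξ) ≥ (θ/(θ+1))·K1(ξ), where θ > 0 is the constant from condition (G2). -/

import Mathlib

/-- Under conditions (G1) and (G2), the pointwise estimate
`K1(ξ) + ξ·K1'(ξ) ≥ (θ/(θ+1))·K1(ξ)` for every `ξ > 0`, the key estimate behind the
strict monotonicity on bounded sets of `F(y) = K1(|y|)y`. -/
theorem K1_add_mul_deriv_ge
    (g g' sol K1 : ℝ → ℝ) (θ : ℝ)
    -- condition (G1)
    (hg_cont : ContinuousOn g (Set.Ici 0))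
    (hg_deriv : ∀ s, 0 < s → HasDerivAt g (g' s) s)
    (hg'_cont : ContinuousOn g' (Set.Ioi 0))
    (hg'_nonneg : ∀ s, 0 < s → 0 ≤ g' s)
    (hg0 : 0 < g 0)
    -- condition (G2)
    (hθ : 0 < θ)
    (hG2 : ∀ s, 0 < s → θ * s * g' s ≤ g s)
    -- the implicit function s(ξ): the unique nonnegative solution of s·g(s) = ξ
    (hsol : ∀ ξ, 0 ≤ ξ → (0 ≤ sol ξ ∧ sol ξ * g (sol ξ) = ξ))
    -- the Forchheimer coefficient
    (hK1 : ∀ ξ, 0 ≤ ξ → K1 ξ = 1 / g (sol ξ)) :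
    ∀ ξ, 0 < ξ → ∀ k', HasDerivAt K1 k' ξ →
      θ / (θ + 1) * K1 ξ ≤ K1 ξ + ξ * k' := by
  -- g is monotone on [0, ∞), hence positive there
  have hg_mono : MonotoneOn g (Set.Ici 0) := by
    apply monotoneOn_of_deriv_nonneg (convex_Ici 0) hg_cont
    · intro x hx
      rw [interior_Ici] at hx
      exact (hg_deriv x hx).differentiableAt.differentiableWithinAt
    · intro x hx
      rw [interior_Ici] at hx
      rw [(hg_deriv x hx).deriv]
      exact hg'_nonneg x hx
  have hg_pos : ∀ s, 0 ≤ s → 0 < g s := fun s hs =>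
    lt_of_lt_of_le hg0 (hg_mono (le_refl (0:ℝ)) hs hs)
  -- Φ(s) = s * g(s)
  set Φ : ℝ → ℝ := fun s => s * g s with hΦ
  have hΦ_cont : ContinuousOn Φ (Set.Ici 0) := continuousOn_id.mul hg_cont
  have hΦ_deriv : ∀ s, 0 < s → HasDerivAt Φ (g s + s * g' s) s := by
    intro s hs
    have := (hasDerivAt_id s).mul (hg_deriv s hs)
    exact ((hasDerivAt_id' s).mul (hg_deriv s hs)).congr_deriv (by simp)
  have hΦ_deriv_pos : ∀ s, 0 < s → 0 < g s + s * g' s := fun s hs =>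
    add_pos_of_pos_of_nonneg (hg_pos s hs.le)
      (mul_nonneg hs.le (hg'_nonneg s hs))
  have hΦ_mono : StrictMonoOn Φ (Set.Ici 0) := by
    apply strictMonoOn_of_deriv_pos (convex_Ici 0) hΦ_cont
    intro x hx
    rw [interior_Ici] at hx
    rw [(hΦ_deriv x hx).deriv]
    exact hΦ_deriv_pos x hx
  intro ξ hξ k' hk'
  obtain ⟨hs₀_nonneg, hs₀_eq⟩ := hsol ξ hξ.le
  set s₀ := sol ξ with hs₀def
  have hs₀_pos : 0 < s₀ := by
    rcases hs₀_nonneg.lt_or_eq with h | h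
    · exact h
    · exfalso; rw [← h, zero_mul] at hs₀_eq; linarith
  have hgs₀_pos : 0 < g s₀ := hg_pos s₀ hs₀_nonneg
  have hpos : ∀ᶠ x in nhds ξ, 0 < x := eventually_gt_nhds hξ
  -- continuity of sol at ξ
  have hsol_cont : ContinuousAt sol ξ := by
    rw [ContinuousAt]
    rw [tendsto_order]
    constructor
    · intro a ha
      rcases lt_or_ge a 0 with h | h
      · filter_upwards [hpos] with x hx
        exact lt_of_lt_of_le h (hsol x hx.le).1
      · have hΦa : Φ a < ξ := by
          rw [← hs₀_eq]; exact hΦ_mono h hs₀_nonneg ha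
        filter_upwards [hpos, eventually_gt_nhds hΦa] with x hx hΦax
        obtain ⟨hx1, hx2⟩ := hsol x hx.le
        by_contra hcon
        push_neg at hcon
        have h3 : Φ (sol x) = x := hx2
        have : Φ (sol x) ≤ Φ a := hΦ_mono.monotoneOn hx1 h hcon
        rw [h3] at this; linarith
    · intro b hb
      have hb0 : 0 ≤ b := le_trans hs₀_nonneg hb.le
      have hΦb : ξ < Φ b := by
        rw [← hs₀_eq]; exact hΦ_mono hs₀_nonneg hb0 hb
      filter_upwards [hpos, eventually_lt_nhds hΦb] with x hx hΦbx
      obtain ⟨hx1, hx2⟩ := hsol x hx.le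
      by_contra hcon
      push_neg at hcon
      have h3 : Φ (sol x) = x := hx2
      have : Φ b ≤ Φ (sol x) := hΦ_mono.monotoneOn hb0 hx1 hcon
      rw [h3] at this; linarith
  -- derivative of sol
  have hΦsol : Φ (sol ξ) = ξ := hs₀_eq
  have hD_pos : 0 < g s₀ + s₀ * g' s₀ := hΦ_deriv_pos s₀ hs₀_pos
  have hsol_deriv : HasDerivAt sol (g s₀ + s₀ * g' s₀)⁻¹ ξ := by
    apply HasDerivAt.of_local_left_inverse hsol_cont
      (hΦ_deriv s₀ hs₀_pos) hD_pos.ne'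
    filter_upwards [hpos] with x hx
    exact (hsol x hx.le).2
  -- derivative of K1
  have hgsol : HasDerivAt (fun x => g (sol x))
      (g' s₀ * (g s₀ + s₀ * g' s₀)⁻¹) ξ :=
    (hg_deriv s₀ hs₀_pos).comp ξ hsol_deriv
  have hinv : HasDerivAt (fun x => (g (sol x))⁻¹)
      (-(g' s₀ * (g s₀ + s₀ * g' s₀)⁻¹) / g s₀ ^ 2) ξ :=
    hgsol.inv hgs₀_pos.ne'
  have hK1_deriv : HasDerivAt K1
      (-(g' s₀ * (g s₀ + s₀ * g' s₀)⁻¹) / g s₀ ^ 2) ξ := by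
    apply hinv.congr_of_eventuallyEq
    filter_upwards [hpos] with x hx
    rw [hK1 x hx.le, one_div]
  have hk'_eq : k' = -(g' s₀ * (g s₀ + s₀ * g' s₀)⁻¹) / g s₀ ^ 2 :=
    hk'.unique hK1_deriv
  -- final algebra
  set G := g s₀
  set A := g' s₀
  set D := G + s₀ * A with hDdef
  have hA : 0 ≤ A := hg'_nonneg s₀ hs₀_pos
  have hkey : θ * s₀ * A ≤ G := hG2 s₀ hs₀_pos
  rw [hK1 ξ hξ.le, hk'_eq]
  have hRHS : 1 / G + ξ * (-(A * D⁻¹) / G ^ 2) = 1 / D := by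
    rw [← hs₀_eq]
    field_simp
    ring
  show θ / (θ + 1) * (1 / G) ≤ 1 / G + ξ * (-(A * D⁻¹) / G ^ 2)
  rw [hRHS]
  rw [div_mul_div_comm, mul_one, div_le_div_iff₀ (by positivity) hD_pos]
  have : θ * D = θ * G + θ * s₀ * A := by rw [hDdef]; ring
  nlinarith [hgs₀_pos]
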